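/- (Mollifier with vanishing moments) For every positive integer L there exists a smooth function φ̃ ∈ C^∞(ℝ; ℝ) with support contained in [−1, 1] such that ∫_ℝ φ̃(x) dx = 1 and ∫_ℝ φ̃(x) xⁿ dx = 0 for every n = 1, 2, …, L. -/

import Mathlib

open Set MeasureTheory

open Polynomial in
lemma lagrange_key (L n : ℕ) (hn : n ≤ L) :
    ∑ j ∈ Finset.range (L+1),
      (Lagrange.basis (Finset.range (L+1)) (fun j : ℕ => ((j:ℝ)+1)⁻¹) j).eval 0
        * ((j:ℝ)+1)⁻¹ ^ n = if n = 0 then 1 else 0 := by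
  set v : ℕ → ℝ := fun j => ((j:ℝ)+1)⁻¹ with hv
  have hinj : Set.InjOn v (Finset.range (L+1)) := by
    intro a _ b _ hab
    have ha : ((a:ℝ)+1) ≠ 0 := by positivity
    have hb : ((b:ℝ)+1) ≠ 0 := by positivity
    have : ((a:ℝ)+1) = (b:ℝ)+1 := by
      simpa [hv, inv_eq_iff_eq_inv, inv_inv] using hab
    exact_mod_cast (by linarith : (a:ℝ) = b)
  have hdeg : (X^n : ℝ[X]).degree < (Finset.range (L+1)).card := by
    rw [Polynomial.degree_X_pow, Finset.card_range]
    exact_mod_cast Nat.lt_succ_of_le hn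
  have h := congrArg (Polynomial.eval 0) (Lagrange.eq_interpolate hinj hdeg)
  rw [Lagrange.interpolate_apply, Polynomial.eval_finset_sum] at h
  simp only [Polynomial.eval_mul, Polynomial.eval_C, Polynomial.eval_pow,
    Polynomial.eval_X, zero_pow_eq] at h
  rw [show (∑ j ∈ Finset.range (L+1),
      (Lagrange.basis (Finset.range (L+1)) v j).eval 0 * v j ^ n)
    = ∑ j ∈ Finset.range (L+1), v j ^ n * (Lagrange.basis (Finset.range (L+1)) v j).eval 0
    from Finset.sum_congr rfl fun j _ => mul_comm _ _, ← h]

/-- **Mollifier with vanishing moments.** For every positive integer `L` there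
is a smooth function `φ̃ : ℝ → ℝ` supported in `[−1,1]` with `∫ φ̃ = 1` and
`∫ φ̃(x) xⁿ dx = 0` for `n = 1, …, L`. -/
theorem statement_16 (L : ℕ) (hL : 0 < L) :
    ∃ φ : ℝ → ℝ,
      ContDiff ℝ (⊤ : ℕ∞) φ ∧
      tsupport φ ⊆ Icc (-1:ℝ) 1 ∧
      (∫ x : ℝ, φ x) = 1 ∧
      ∀ n : ℕ, 1 ≤ n → n ≤ L → (∫ x : ℝ, φ x * x ^ n) = 0 := by
  classical
  set f : ContDiffBump (0:ℝ) := ⟨1/2, 1, by norm_num, by norm_num⟩ with hf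
  set φ0 : ℝ → ℝ := f.normed volume with hφ0
  set v : ℕ → ℝ := fun j => ((j:ℝ)+1)⁻¹ with hv
  have hvpos : ∀ j : ℕ, 0 < v j := fun j => by positivity
  have hvle : ∀ j : ℕ, v j ≤ 1 := fun j => by
    rw [hv]; simp only
    rw [inv_le_one_iff₀]; right; linarith [Nat.cast_nonneg (α := ℝ) j]
  set a : ℕ → ℝ := fun j =>
    (Lagrange.basis (Finset.range (L+1)) v j).eval 0 with ha
  set φ : ℝ → ℝ := fun x => ∑ j ∈ Finset.range (L+1), a j * (v j)⁻¹ * φ0 (x / v j) with hφ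
  -- vanishing outside [-1,1]
  have hφ0supp : ∀ z : ℝ, 1 ≤ |z| → φ0 z = 0 := by
    intro z hz
    have hzb : z ∉ Metric.ball (0:ℝ) f.rOut := by
      have hr : f.rOut = 1 := rfl
      simp only [hr, Metric.mem_ball, dist_zero_right, Real.norm_eq_abs, not_lt]
      exact hz
    rw [← f.support_normed_eq (μ := volume)] at hzb
    simpa [hφ0] using Function.notMem_support.mp hzb
  have hterm0 : ∀ j : ℕ, ∀ x : ℝ, x ∉ Icc (-1:ℝ) 1 → φ0 (x / v j) = 0 := by
    intro j x hx
    apply hφ0supp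
    have h1 : 1 < |x| := by
      simp only [mem_Icc, not_and_or, not_le] at hx
      rcases hx with h|h
      · rw [abs_of_neg (by linarith)]; linarith
      · rw [abs_of_pos (by linarith)]; linarith
    rw [abs_div, abs_of_pos (hvpos j), le_div_iff₀ (hvpos j), one_mul]
    exact le_trans (hvle j) h1.le
  -- smoothness
  have hsmooth : ContDiff ℝ (⊤ : ℕ∞) φ := by
    rw [hφ]
    apply ContDiff.sum
    intro j _
    exact contDiff_const.mul (f.contDiff_normed.comp (contDiff_id.div_const (v j)))
  have hcont0 : Continuous φ0 := f.continuous_normed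
  have hint : ∀ (j : ℕ) (n : ℕ),
      Integrable (fun x : ℝ => a j * (v j)⁻¹ * φ0 (x / v j) * x ^ n) volume := by
    intro j n
    apply Continuous.integrable_of_hasCompactSupport
    · exact (continuous_const.mul (hcont0.comp (continuous_id.div_const (v j)))).mul
        (continuous_pow n)
    · apply HasCompactSupport.intro (isCompact_Icc (a := (-1:ℝ)) (b := 1))
      intro x hx
      rw [hterm0 j x hx]
      ring
  have hmom : ∀ n : ℕ, n ≤ L →
      (∫ x : ℝ, φ x * x ^ n) = (if n = 0 then 1 else 0) * ∫ y : ℝ, φ0 y * y ^ n := by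
    intro n hn
    have h1 : (∫ x : ℝ, φ x * x ^ n)
        = ∑ j ∈ Finset.range (L+1), ∫ x : ℝ, a j * (v j)⁻¹ * φ0 (x / v j) * x ^ n := by
      rw [← integral_finset_sum _ (fun j _ => hint j n)]
      congr 1
      ext x
      rw [hφ]
      simp only
      rw [Finset.sum_mul]
    rw [h1]
    have h2 : ∀ j ∈ Finset.range (L+1),
        (∫ x : ℝ, a j * (v j)⁻¹ * φ0 (x / v j) * x ^ n)
          = a j * v j ^ n * ∫ y : ℝ, φ0 y * y ^ n := by
      intro j _
      have hne : v j ≠ 0 := (hvpos j).ne'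
      have heq : ∀ x : ℝ, a j * (v j)⁻¹ * φ0 (x / v j) * x ^ n
          = (a j * (v j)⁻¹ * v j ^ n) * (φ0 (x / v j) * (x / v j) ^ n) := by
        intro x
        have hp : v j ^ n * (v j ^ n)⁻¹ = 1 := mul_inv_cancel₀ (pow_ne_zero n hne)
        linear_combination (-(a j * (v j)⁻¹ * φ0 (x / v j) * x ^ n)) * hp
      simp_rw [heq]
      rw [MeasureTheory.integral_const_mul,
        MeasureTheory.Measure.integral_comp_div (fun y => φ0 y * y ^ n) (v j),
        abs_of_pos (hvpos j), smul_eq_mul]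
      field_simp
    rw [Finset.sum_congr rfl h2, ← Finset.sum_mul]
    congr 1
    simpa [ha, hv] using lagrange_key L n hn
  refine ⟨φ, hsmooth, ?_, ?_, ?_⟩
  · -- support
    apply closure_minimal _ isClosed_Icc
    intro x hx
    by_contra hxn
    apply hx
    rw [hφ]
    simp only
    rw [Finset.sum_eq_zero]
    intro j _
    rw [hterm0 j x hxn, mul_zero]
  · -- integral equals 1
    have h := hmom 0 (Nat.zero_le L)
    simp only [pow_zero, mul_one, if_pos, one_mul] at h
    rw [h]
    exact f.integral_normed
  · intro n hn1 hn2
    rw [hmom n hn2, if_neg (by omega), zero_mul]
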